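/- Let A be a finite nonempty connected subset of ℤ², let H_1, …, H_k be the finite connected components of ℤ² \ A, and let Ã = A ∪ H_1 ∪ ⋯ ∪ H_k be the simply connected fill-in of A. Then the edge boundary of A decomposes as the disjoint union ∂A = ∂Ã ⊔ ∂H_1 ⊔ ⋯ ⊔ ∂H_k; in particular |∂A| = |∂Ã| + Σ_{i=1}^{k} |∂H_i|, and Ã and each H_i are simply connected. -/

import Mathlib

open MeasureTheory ProbabilityTheory

/-- Nearest-neighbor adjacency on the square lattice `ℤ²`. -/
def adjZ2 (u v : ℤ × ℤ) : Prop :=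
  (u.1 - v.1).natAbs + (u.2 - v.2).natAbs = 1

instance : DecidableRel adjZ2 := fun u v => by unfold adjZ2; infer_instance

/-- The square lattice `ℤ²` as a simple graph. -/
def latticeGraph : SimpleGraph (ℤ × ℤ) where
  Adj := adjZ2
  symm := by
    constructor
    intro u v h
    unfold adjZ2 at *
    omega
  loopless := by constructor; intro v h; simp [adjZ2] at h

/-- A set of vertices is connected if the induced subgraph is connected. -/
def connSub (A : Set (ℤ × ℤ)) : Prop := (latticeGraph.induce A).Connected

/-- A finite nonempty set is simply connected if it is connected and its
complement is connected. -/
def simplyConn (A : Set (ℤ × ℤ)) : Prop :=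
  A.Nonempty ∧ A.Finite ∧ connSub A ∧ connSub Aᶜ

/-- The edge boundary of `A`: nearest-neighbor edges with exactly one endpoint in `A`. -/
def edgeBoundary (A : Set (ℤ × ℤ)) : Set (Sym2 (ℤ × ℤ)) :=
  {e | ∃ u v, e = s(u, v) ∧ adjZ2 u v ∧ u ∈ A ∧ v ∉ A}

/-- `|∂A|`, the number of boundary edges of `A`. -/
noncomputable def bdCard (A : Set (ℤ × ℤ)) : ℕ := (edgeBoundary A).ncard

/-- The box `Λ_N = {v : |v|_∞ ≤ N}`. -/
def latticeBox (N : ℕ) : Set (ℤ × ℤ) := {v | |v.1| ≤ (N : ℤ) ∧ |v.2| ≤ (N : ℤ)}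

/-- The collection `𝒜_N` of lattice animals: nonempty simply connected subsets of
`Λ_N` containing the origin. -/
def animals (N : ℕ) : Set (Set (ℤ × ℤ)) :=
  {A | A ⊆ latticeBox N ∧ (0, 0) ∈ A ∧ simplyConn A}

/-- Total field weight `Σ_{i ∈ A} Σ_{α=0}^{q-1} h_i^α` of a set `A`. -/
noncomputable def fieldWeight (q : ℕ) (h : (ℤ × ℤ) × Fin q → ℝ) (A : Set (ℤ × ℤ)) : ℝ :=
  ∑ᶠ i ∈ A, ∑ α : Fin q, h (i, α)

/-- The greedy lattice animal `G_N` for field realization `h`. -/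
noncomputable def gla (q N : ℕ) (h : (ℤ × ℤ) × Fin q → ℝ) : ℝ :=
  sSup {r | ∃ A ∈ animals N, r = fieldWeight q h A / (bdCard A : ℝ)}

/-- The connected component of `x` inside the induced subgraph on `S ⊆ ℤ²`. -/
def compOf (S : Set (ℤ × ℤ)) (x : ℤ × ℤ) : Set (ℤ × ℤ) :=
  {y | ∃ (hx : x ∈ S) (hy : y ∈ S), (latticeGraph.induce S).Reachable ⟨x, hx⟩ ⟨y, hy⟩}

section Reach

variable {S T : Set (ℤ × ℤ)}

/-- Reachability within a set `S` by nearest-neighbor steps. -/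
inductive ReachIn (S : Set (ℤ × ℤ)) : (ℤ × ℤ) → (ℤ × ℤ) → Prop
  | refl (x : ℤ × ℤ) (hx : x ∈ S) : ReachIn S x x
  | tail {x y z : ℤ × ℤ} : ReachIn S x y → adjZ2 y z → z ∈ S → ReachIn S x z

lemma ReachIn.mem_left {x y : ℤ × ℤ} (h : ReachIn S x y) : x ∈ S := by
  induction h with
  | refl hx => exact hx
  | tail _ _ _ ih => exact ih

lemma ReachIn.mem_right {x y : ℤ × ℤ} (h : ReachIn S x y) : y ∈ S := by
  induction h with
  | refl hx => exact hx
  | tail _ _ hz _ => exact hz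

lemma ReachIn.trans {x y z : ℤ × ℤ} (h : ReachIn S x y) (h' : ReachIn S y z) :
    ReachIn S x z := by
  induction h' with
  | refl _ => exact h
  | tail _ ha hz ih => exact ih.tail ha hz

lemma ReachIn.symm {x y : ℤ × ℤ} (h : ReachIn S x y) : ReachIn S y x := by
  induction h with
  | refl hx => exact .refl _ hx
  | tail r ha hz ih => exact ((ReachIn.refl _ hz).tail (latticeGraph.adj_symm ha) r.mem_right).trans ih

lemma ReachIn.mono (hST : S ⊆ T) {x y : ℤ × ℤ} (h : ReachIn S x y) : ReachIn T x y := by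
  induction h with
  | refl hx => exact .refl _ (hST hx)
  | tail _ ha hz ih => exact ih.tail ha (hST hz)

lemma ReachIn.reachable' {x y : ℤ × ℤ} (h : ReachIn S x y) :
    ∀ (a b : ↥S), (a : ℤ × ℤ) = x → (b : ℤ × ℤ) = y →
      (latticeGraph.induce S).Reachable a b := by
  induction h with
  | refl hx =>
      intro a b ha hb
      cases Subtype.ext (ha.trans hb.symm)
      exact SimpleGraph.Reachable.refl _
  | @tail y z r ha hz ih =>
      intro a b h1 h2
      refine (ih a ⟨y, r.mem_right⟩ h1 rfl).trans (SimpleGraph.Adj.reachable ?_)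
      show adjZ2 y b.1
      rw [h2]
      exact ha

lemma walk_reachIn : ∀ {a b : ↥S}, (latticeGraph.induce S).Walk a b → ReachIn S a.1 b.1 := by
  intro a b w
  induction w with
  | nil => exact .refl _ (Subtype.prop _)
  | @cons a b c hab p ih =>
      exact ((ReachIn.refl a.1 a.2).tail (hab : adjZ2 a.1 b.1) b.2).trans ih

lemma reachIn_iff_reachable {x y : ℤ × ℤ} (hx : x ∈ S) (hy : y ∈ S) :
    ReachIn S x y ↔ (latticeGraph.induce S).Reachable ⟨x, hx⟩ ⟨y, hy⟩ := by
  constructor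
  · intro h; exact h.reachable' _ _ rfl rfl
  · intro h; obtain ⟨w⟩ := h; exact walk_reachIn w

lemma connSub_iff : connSub S ↔ S.Nonempty ∧ ∀ x ∈ S, ∀ y ∈ S, ReachIn S x y := by
  constructor
  · intro hc
    obtain ⟨⟨x, hx⟩⟩ := hc.nonempty
    refine ⟨⟨x, hx⟩, fun a ha b hb => ?_⟩
    exact (reachIn_iff_reachable ha hb).2 (hc.preconnected ⟨a, ha⟩ ⟨b, hb⟩)
  · rintro ⟨⟨x, hx⟩, h⟩
    have : Nonempty ↥S := ⟨⟨x, hx⟩⟩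
    exact SimpleGraph.Connected.mk (fun a b => (h a.1 a.2 b.1 b.2).reachable' a b rfl rfl)

end Reach
section Comp

variable {S : Set (ℤ × ℤ)} {x y u v : ℤ × ℤ}

lemma mem_compOf_iff : y ∈ compOf S x ↔ ReachIn S x y := by
  constructor
  · rintro ⟨hx, hy, hr⟩
    exact (reachIn_iff_reachable hx hy).2 hr
  · intro h
    exact ⟨h.mem_left, h.mem_right, (reachIn_iff_reachable h.mem_left h.mem_right).1 h⟩

lemma compOf_subset : compOf S x ⊆ S := fun _ h => (mem_compOf_iff.1 h).mem_right

lemma mem_compOf_self (hx : x ∈ S) : x ∈ compOf S x := mem_compOf_iff.2 (.refl x hx)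

/-- Components are closed under adjacency within `S`. -/
lemma compOf_closed (hu : u ∈ compOf S x) (ha : adjZ2 u v) (hv : v ∈ S) :
    v ∈ compOf S x :=
  mem_compOf_iff.2 ((mem_compOf_iff.1 hu).tail ha hv)

lemma compOf_eq_of_mem (hy : y ∈ compOf S x) : compOf S y = compOf S x := by
  have hxy : ReachIn S x y := mem_compOf_iff.1 hy
  ext z
  simp only [mem_compOf_iff]
  exact ⟨fun h => hxy.trans h, fun h => hxy.symm.trans h⟩

lemma reachIn_compOf (h : ReachIn S x y) : ReachIn (compOf S x) x y := by
  induction h with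
  | refl hx => exact .refl _ (mem_compOf_self hx)
  | @tail y z r ha hz ih =>
      exact ih.tail ha (compOf_closed ih.mem_right ha hz)

lemma connSub_compOf (hx : x ∈ S) : connSub (compOf S x) := by
  refine connSub_iff.2 ⟨⟨x, mem_compOf_self hx⟩, fun a ha b hb => ?_⟩
  exact (reachIn_compOf (mem_compOf_iff.1 ha)).symm.trans (reachIn_compOf (mem_compOf_iff.1 hb))

end Comp

section Segments

variable {S : Set (ℤ × ℤ)}

lemma reachIn_horiz (b : ℤ) (hS : ∀ t : ℤ, (t, b) ∈ S) (a c : ℤ) :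
    ReachIn S (a, b) (c, b) := by
  have key : ∀ n : ℕ, ∀ a : ℤ, ReachIn S (a, b) (a + n, b) := by
    intro n
    induction n with
    | zero => intro a; simpa using ReachIn.refl (a, b) (hS a)
    | succ n ih =>
        intro a
        have := (ih a).tail (y := (a + n, b)) (z := (a + n + 1, b))
          (by simp [adjZ2]) (hS _)
        simpa [add_assoc] using this
  rcases le_total a c with h | h
  · have := key (c - a).toNat a
    rwa [Int.toNat_of_nonneg (by omega), add_sub_cancel] at this
  · have := key (a - c).toNat c
    rw [Int.toNat_of_nonneg (by omega), add_sub_cancel] at this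
    exact this.symm

lemma reachIn_vert (a : ℤ) (hS : ∀ t : ℤ, (a, t) ∈ S) (b c : ℤ) :
    ReachIn S (a, b) (a, c) := by
  have key : ∀ n : ℕ, ∀ b : ℤ, ReachIn S (a, b) (a, b + n) := by
    intro n
    induction n with
    | zero => intro b; simpa using ReachIn.refl (a, b) (hS b)
    | succ n ih =>
        intro b
        have := (ih b).tail (y := (a, b + n)) (z := (a, b + n + 1))
          (by simp [adjZ2]) (hS _)
        simpa [add_assoc] using this
  rcases le_total b c with h | h
  · have := key (c - b).toNat b
    rwa [Int.toNat_of_nonneg (by omega), add_sub_cancel] at this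
  · have := key (b - c).toNat c
    rw [Int.toNat_of_nonneg (by omega), add_sub_cancel] at this
    exact this.symm

/-- Any two points outside the box `Λ_N` are connected outside the box. -/
lemma reachIn_outside_box (N : ℕ) {u v : ℤ × ℤ}
    (hu : u ∉ latticeBox N) (hv : v ∉ latticeBox N) :
    ReachIn (latticeBox N)ᶜ u v := by
  have corner : ∀ w : ℤ × ℤ, w ∉ latticeBox N →
      ReachIn (latticeBox N)ᶜ w ((N : ℤ) + 1, (N : ℤ) + 1) := by
    rintro ⟨a, b⟩ hw
    simp only [latticeBox, Set.mem_setOf_eq, not_and_or, not_le] at hw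
    rcases hw with h | h
    · -- |a| > N : move vertically to (a, N+1), then horizontally
      have r1 : ReachIn (latticeBox N)ᶜ (a, b) (a, (N : ℤ) + 1) :=
        reachIn_vert a (fun t => by have h1 : |(N:ℤ)+1| = (N:ℤ)+1 := abs_of_nonneg (by positivity); simp [latticeBox]; omega) b _
      have r2 : ReachIn (latticeBox N)ᶜ (a, (N : ℤ) + 1) ((N : ℤ) + 1, (N : ℤ) + 1) :=
        reachIn_horiz ((N : ℤ) + 1) (fun t => by have h1 : |(N:ℤ)+1| = (N:ℤ)+1 := abs_of_nonneg (by positivity); simp [latticeBox]; omega) a _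
      exact r1.trans r2
    · have r1 : ReachIn (latticeBox N)ᶜ (a, b) ((N : ℤ) + 1, b) :=
        reachIn_horiz b (fun t => by have h1 : |(N:ℤ)+1| = (N:ℤ)+1 := abs_of_nonneg (by positivity); simp [latticeBox]; omega) a _
      have r2 : ReachIn (latticeBox N)ᶜ ((N : ℤ) + 1, b) ((N : ℤ) + 1, (N : ℤ) + 1) :=
        reachIn_vert ((N : ℤ) + 1) (fun t => by have h1 : |(N:ℤ)+1| = (N:ℤ)+1 := abs_of_nonneg (by positivity); simp [latticeBox]; omega) b _
      exact r1.trans r2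
  exact (corner u hu).trans (corner v hv).symm

/-- The whole lattice is connected. -/
lemma reachIn_univ (u v : ℤ × ℤ) : ReachIn (Set.univ) u v := by
  have r1 : ReachIn (Set.univ) (u.1, u.2) (v.1, u.2) :=
    reachIn_horiz u.2 (fun _ => Set.mem_univ _) _ _
  have r2 : ReachIn (Set.univ) (v.1, u.2) (v.1, v.2) :=
    reachIn_vert v.1 (fun _ => Set.mem_univ _) _ _
  simpa using r1.trans r2

end Segments
section Aux

lemma latticeBox_finite (N : ℕ) : (latticeBox N).Finite := by
  have : latticeBox N ⊆ (Set.Icc (-(N:ℤ)) N) ×ˢ (Set.Icc (-(N:ℤ)) N) := by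
    intro v hv
    exact ⟨Set.mem_Icc.2 (abs_le.1 hv.1), Set.mem_Icc.2 (abs_le.1 hv.2)⟩
  exact Set.Finite.subset (Set.Finite.prod (Set.finite_Icc _ _) (Set.finite_Icc _ _)) this

lemma exists_box (A : Set (ℤ × ℤ)) (hfin : A.Finite) : ∃ N : ℕ, A ⊆ latticeBox N := by
  obtain ⟨n, hn⟩ := (hfin.image (fun v : ℤ × ℤ => v.1.natAbs ⊔ v.2.natAbs)).bddAbove
  refine ⟨n, fun v hv => ?_⟩
  have := hn (Set.mem_image_of_mem _ hv)
  simp only [sup_le_iff] at this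
  exact ⟨by rw [abs_le]; omega, by rw [abs_le]; omega⟩

lemma latticeBox_compl_infinite (N : ℕ) : Set.Infinite ((latticeBox N)ᶜ) := by
  apply Set.infinite_of_injective_forall_mem (f := fun t : ℤ => ((N : ℤ) + 1, t))
  · intro a b hab
    simpa [Prod.ext_iff] using hab
  · intro t
    simp only [latticeBox, Set.mem_compl_iff, Set.mem_setOf_eq, not_and_or, not_le]
    left
    have : |(N : ℤ) + 1| = (N : ℤ) + 1 := abs_of_nonneg (by positivity)
    omega

lemma compl_box_subset_compl {A : Set (ℤ × ℤ)} {N : ℕ} (h : A ⊆ latticeBox N) :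
    (latticeBox N)ᶜ ⊆ Aᶜ := Set.compl_subset_compl.2 h

/-- Neighbors of a point form a finite set. -/
lemma nbrs_finite (u : ℤ × ℤ) : {v | adjZ2 u v}.Finite := by
  have : {v | adjZ2 u v} ⊆ {(u.1 + 1, u.2), (u.1 - 1, u.2), (u.1, u.2 + 1), (u.1, u.2 - 1)} := by
    intro v h
    simp only [Set.mem_setOf_eq, adjZ2] at h
    simp [Prod.ext_iff]
    omega
  exact Set.Finite.subset (Set.toFinite _) this

lemma edgeBoundary_finite {A : Set (ℤ × ℤ)} (hfin : A.Finite) : (edgeBoundary A).Finite := by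
  have hsub : edgeBoundary A ⊆
      (fun p : (ℤ × ℤ) × (ℤ × ℤ) => s(p.1, p.2)) '' (A ×ˢ {v | ∃ u ∈ A, adjZ2 u v}) := by
    rintro e ⟨u, v, rfl, ha, hu, hv⟩
    exact ⟨(u, v), ⟨hu, u, hu, ha⟩, rfl⟩
  refine Set.Finite.subset (Set.Finite.image _ (Set.Finite.prod hfin ?_)) hsub
  have : {v | ∃ u ∈ A, adjZ2 u v} ⊆ ⋃ u ∈ A, {v | adjZ2 u v} := by
    rintro v ⟨u, hu, ha⟩
    exact Set.mem_biUnion hu ha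
  exact Set.Finite.subset (Set.Finite.biUnion hfin (fun u _ => nbrs_finite u)) this

/-- ncard of a disjoint finite union over a `Fintype`. -/
lemma ncard_iUnion_eq {ι : Type*} [Fintype ι] {α : Type*} (s : ι → Set α)
    (hfin : ∀ i, (s i).Finite) (hdisj : ∀ i j, i ≠ j → Disjoint (s i) (s j)) :
    (⋃ i, s i).ncard = ∑ i, (s i).ncard := by
  classical
  have h1 : (⋃ i, s i) = ↑(Finset.univ.biUnion fun i => (hfin i).toFinset) := by
    ext x
    simp [Set.mem_iUnion]
  rw [h1, Set.ncard_coe_finset, Finset.card_biUnion]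
  · exact Finset.sum_congr rfl fun i _ => (Set.ncard_eq_toFinset_card (s i) (hfin i)).symm
  · intro i _ j _ hij
    exact Set.Finite.disjoint_toFinset.2 (hdisj i j hij)

/-- Every point of `Aᶜ` can reach, inside its component, a point adjacent to `A`. -/
lemma exists_touch {A : Set (ℤ × ℤ)} (hne : A.Nonempty) {y : ℤ × ℤ} (hy : y ∈ Aᶜ) :
    ∃ u v, ReachIn Aᶜ y u ∧ adjZ2 u v ∧ v ∈ A := by
  obtain ⟨a0, ha0⟩ := hne
  have hglob : ReachIn Set.univ y a0 := reachIn_univ y a0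
  have key : ∀ w : ℤ × ℤ, ReachIn Set.univ y w →
      (∃ u v, ReachIn Aᶜ y u ∧ adjZ2 u v ∧ v ∈ A) ∨ (w ∉ A ∧ ReachIn Aᶜ y w) := by
    intro w hw
    induction hw with
    | refl _ => exact Or.inr ⟨hy, .refl y hy⟩
    | @tail c d r ha _ ih =>
        rcases ih with h | ⟨hc, rc⟩
        · exact Or.inl h
        · by_cases hd : d ∈ A
          · exact Or.inl ⟨c, d, rc, ha, hd⟩
          · exact Or.inr ⟨hd, rc.tail ha hd⟩
  rcases key a0 hglob with h | ⟨h, _⟩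
  · exact h
  · exact absurd ha0 h

end Aux
/-- Boundary decomposition: if `A` is finite, nonempty and connected, and
`H 0, …, H (k-1)` enumerate (without repetition) the finite connected components of
`ℤ² \ A` (the holes of `A`), then with `Ã = A ∪ ⋃ i, H i` the fill-in of `A`, the edge
boundary of `A` is the disjoint union of `∂Ã` and the `∂(H i)`; in particular
`|∂A| = |∂Ã| + Σ_i |∂(H i)|`, and `Ã` and each `H i` are simply connected. -/
theorem boundary_decomposition_into_fill_in_and_holes
    (A : Set (ℤ × ℤ)) (hfin : A.Finite) (hne : A.Nonempty) (hconn : connSub A)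
    (k : ℕ) (H : Fin k → Set (ℤ × ℤ))
    (hHfin : ∀ i, (H i).Finite)
    (hHcomp : ∀ i, ∃ x, ∃ _ : x ∈ Aᶜ, H i = compOf Aᶜ x)
    (hHinj : Function.Injective H)
    (hHall : ∀ x, ∀ _ : x ∈ Aᶜ, (compOf Aᶜ x).Finite → ∃ i, H i = compOf Aᶜ x) :
    edgeBoundary A = edgeBoundary (A ∪ ⋃ i, H i) ∪ ⋃ i, edgeBoundary (H i) ∧
    (∀ i, Disjoint (edgeBoundary (A ∪ ⋃ j, H j)) (edgeBoundary (H i))) ∧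
    (∀ i j, i ≠ j → Disjoint (edgeBoundary (H i)) (edgeBoundary (H j))) ∧
    (edgeBoundary A).ncard =
      (edgeBoundary (A ∪ ⋃ i, H i)).ncard + ∑ i, (edgeBoundary (H i)).ncard ∧
    simplyConn (A ∪ ⋃ i, H i) ∧ ∀ i, simplyConn (H i) := by
  classical
  obtain ⟨a0, ha0⟩ := hne
  choose x hxmem hHeq using hHcomp
  set Atil := A ∪ ⋃ i, H i with hAtil
  have hHsubC : ∀ i, H i ⊆ Aᶜ := fun i => (hHeq i) ▸ compOf_subset
  have hHx : ∀ i, x i ∈ H i := fun i => (hHeq i) ▸ mem_compOf_self (hxmem i)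
  have hHcompOf_mem : ∀ i, ∀ {y}, y ∈ H i → compOf Aᶜ y = H i := by
    intro i y hy
    rw [hHeq i] at hy ⊢
    exact compOf_eq_of_mem hy
  have hHclosed : ∀ i, ∀ {u v}, u ∈ H i → adjZ2 u v → v ∈ Aᶜ → v ∈ H i := by
    intro i u v hu ha hv
    rw [hHeq i] at hu ⊢
    exact compOf_closed hu ha hv
  have hHdisj : ∀ i j, i ≠ j → Disjoint (H i) (H j) := by
    intro i j hij
    rw [Set.disjoint_left]
    intro y hyi hyj
    exact hij (hHinj (((hHcompOf_mem i hyi).symm.trans (hHcompOf_mem j hyj))))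
  have hAsub : A ⊆ Atil := Set.subset_union_left
  have hHsub : ∀ i, H i ⊆ Atil := fun i => (Set.subset_iUnion H i).trans Set.subset_union_right
  obtain ⟨N, hbox⟩ := exists_box A hfin
  have habsN : |(N : ℤ) + 1| = (N : ℤ) + 1 := abs_of_nonneg (by positivity)
  set z : ℤ × ℤ := ((N : ℤ) + 1, (N : ℤ) + 1) with hzdef
  have hz_out : z ∉ latticeBox N := by
    simp only [latticeBox, Set.mem_setOf_eq, hzdef]
    omega
  have hzA : z ∈ Aᶜ := fun hz => hz_out (hbox hz)
  -- the infinite component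
  have hout_sub : (latticeBox N)ᶜ ⊆ compOf Aᶜ z := by
    intro p hp
    exact mem_compOf_iff.2 ((reachIn_outside_box N hz_out hp).mono (compl_box_subset_compl hbox))
  have hzinf : (compOf Aᶜ z).Infinite :=
    (latticeBox_compl_infinite N).mono hout_sub
  have mem_inf : ∀ w ∈ Aᶜ, (compOf Aᶜ w).Infinite → w ∈ compOf Aᶜ z := by
    intro w hw hinf
    obtain ⟨p, hpC, hpout⟩ : ∃ p ∈ compOf Aᶜ w, p ∉ latticeBox N := by
      by_contra hc
      push_neg at hc
      exact hinf (Set.Finite.subset (latticeBox_finite N) hc)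
    have r1 : ReachIn Aᶜ w p := mem_compOf_iff.1 hpC
    have r2 : ReachIn Aᶜ p z :=
      (reachIn_outside_box N hpout hz_out).mono (compl_box_subset_compl hbox)
    exact mem_compOf_iff.2 (r1.trans r2).symm
  have hAtilC : Atilᶜ = compOf Aᶜ z := by
    ext w
    simp only [hAtil, Set.mem_compl_iff, Set.mem_union, Set.mem_iUnion, not_or, not_exists]
    constructor
    · rintro ⟨hwA, hwH⟩
      by_cases hinf : (compOf Aᶜ w).Infinite
      · exact mem_inf w hwA hinf
      · obtain ⟨i, hi⟩ := hHall w hwA (Set.not_infinite.1 hinf)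
        exact absurd (hi ▸ mem_compOf_self hwA) (hwH i)
    · intro hw
      have hwA : w ∈ Aᶜ := compOf_subset hw
      refine ⟨hwA, fun i hwi => ?_⟩
      have h1 : compOf Aᶜ w = H i := hHcompOf_mem i hwi
      have h2 : compOf Aᶜ w = compOf Aᶜ z := compOf_eq_of_mem hw
      exact (h1 ▸ h2 ▸ hzinf : (H i).Infinite) (hHfin i)
  -- membership facts for boundary edges of H i
  have bdH_struct : ∀ i, ∀ {u v : ℤ × ℤ}, adjZ2 u v → u ∈ H i → v ∉ H i → v ∈ A := by
    intro i u v ha hu hv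
    by_contra hvA
    exact hv (hHclosed i hu ha hvA)
  have bdAtil_struct : ∀ {u v : ℤ × ℤ}, adjZ2 u v → u ∈ Atil → v ∉ Atil → u ∈ A := by
    intro u v ha hu hv
    rcases hu with hu | hu
    · exact hu
    · obtain ⟨i, hi⟩ := Set.mem_iUnion.1 hu
      have hvA : v ∈ Aᶜ := fun hvA => hv (hAsub hvA)
      exact absurd (hHsub i (hHclosed i hi ha hvA)) hv
  -- Claim 1 : decomposition of the boundary
  have claim1 : edgeBoundary A = edgeBoundary Atil ∪ ⋃ i, edgeBoundary (H i) := by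
    ext e
    constructor
    · rintro ⟨u, v, rfl, ha, hu, hv⟩
      by_cases hvH : ∃ i, v ∈ H i
      · obtain ⟨i, hi⟩ := hvH
        refine Or.inr (Set.mem_iUnion.2 ⟨i, v, u, Sym2.eq_swap, latticeGraph.adj_symm ha, hi, ?_⟩)
        exact fun huH => (hHsubC i huH) hu
      · push_neg at hvH
        refine Or.inl ⟨u, v, rfl, ha, hAsub hu, ?_⟩
        rintro (h | h)
        · exact hv h
        · obtain ⟨i, hi⟩ := Set.mem_iUnion.1 h
          exact hvH i hi
    · rintro (⟨u, v, rfl, ha, hu, hv⟩ | h)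
      · exact ⟨u, v, rfl, ha, bdAtil_struct ha hu hv, fun hvA => hv (hAsub hvA)⟩
      · obtain ⟨i, u, v, rfl, ha, hu, hv⟩ := Set.mem_iUnion.1 h
        exact ⟨v, u, Sym2.eq_swap, latticeGraph.adj_symm ha, bdH_struct i ha hu hv,
          fun huA => (hHsubC i hu) huA⟩
  -- Claim 2 : boundary of the fill-in is disjoint from boundaries of holes
  have claim2 : ∀ i, Disjoint (edgeBoundary Atil) (edgeBoundary (H i)) := by
    intro i
    rw [Set.disjoint_left]
    rintro e ⟨u, v, rfl, ha, hu, hv⟩ ⟨a, b, heq, ha', hu', hv'⟩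
    have hbA : b ∈ A := bdH_struct i ha' hu' hv'
    rcases Sym2.eq_iff.1 heq with ⟨rfl, rfl⟩ | ⟨rfl, rfl⟩
    · exact hv (hAsub hbA)
    · exact hv (hHsub i hu')
  -- Claim 3 : boundaries of distinct holes are disjoint
  have claim3 : ∀ i j, i ≠ j → Disjoint (edgeBoundary (H i)) (edgeBoundary (H j)) := by
    intro i j hij
    rw [Set.disjoint_left]
    rintro e ⟨u, v, rfl, ha, hu, hv⟩ ⟨a, b, heq, ha', hu', hv'⟩
    have hvA : v ∈ A := bdH_struct i ha hu hv
    rcases Sym2.eq_iff.1 heq with ⟨rfl, rfl⟩ | ⟨rfl, rfl⟩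
    · exact (Set.disjoint_left.1 (hHdisj i j hij)) hu hu'
    · exact (hHsubC j hu') hvA
  -- finiteness
  have hAtilfin : Atil.Finite := hfin.union (Set.finite_iUnion hHfin)
  have hbdAtilfin : (edgeBoundary Atil).Finite := edgeBoundary_finite hAtilfin
  have hbdHfin : ∀ i, (edgeBoundary (H i)).Finite := fun i => edgeBoundary_finite (hHfin i)
  -- Claim 4 : cardinality
  have claim4 : (edgeBoundary A).ncard =
      (edgeBoundary Atil).ncard + ∑ i, (edgeBoundary (H i)).ncard := by
    rw [claim1, Set.ncard_union_eq (Set.disjoint_iUnion_right.2 claim2) hbdAtilfin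
      (Set.finite_iUnion hbdHfin), ncard_iUnion_eq _ hbdHfin claim3]
  -- reaching a0 inside Atil
  have hconn' := (connSub_iff.1 hconn).2
  have reachA : ∀ p ∈ A, ReachIn A p a0 := fun p hp => hconn' p hp a0 ha0
  have auxAtil : ∀ p ∈ Atil, ReachIn Atil p a0 := by
    rintro p (hp | hp)
    · exact (reachA p hp).mono hAsub
    · obtain ⟨i, hi⟩ := Set.mem_iUnion.1 hp
      obtain ⟨u, v, r, ha, hvA⟩ := exists_touch ⟨a0, ha0⟩ (hHsubC i hi)
      have r' : ReachIn (H i) p u := (hHcompOf_mem i hi) ▸ reachIn_compOf r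
      have r'' : ReachIn Atil p v := ((r'.mono (hHsub i)).tail ha (hAsub hvA))
      exact r''.trans ((reachA v hvA).mono hAsub)
  have hconnAtil : connSub Atil :=
    connSub_iff.2 ⟨⟨a0, hAsub ha0⟩, fun p hp q hq =>
      (auxAtil p hp).trans (auxAtil q hq).symm⟩
  have hconnAtilC : connSub Atilᶜ := by
    rw [hAtilC]
    exact connSub_compOf hzA
  have hscAtil : simplyConn Atil :=
    ⟨⟨a0, hAsub ha0⟩, hAtilfin, hconnAtil, hconnAtilC⟩
  -- each hole is simply connected
  have hscH : ∀ i, simplyConn (H i) := by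
    intro i
    have hAsubHc : A ⊆ (H i)ᶜ := fun a haA hai => (hHsubC i hai) haA
    have auxHc : ∀ p ∈ (H i)ᶜ, ReachIn (H i)ᶜ p a0 := by
      intro p hp
      by_cases hpA : p ∈ A
      · exact (reachA p hpA).mono hAsubHc
      · obtain ⟨u, v, r, ha, hvA⟩ := exists_touch ⟨a0, ha0⟩ hpA
        have hCsub : compOf Aᶜ p ⊆ (H i)ᶜ := by
          intro y hy hyH
          have h1 : compOf Aᶜ y = compOf Aᶜ p := compOf_eq_of_mem hy
          have h2 : compOf Aᶜ y = H i := hHcompOf_mem i hyH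
          exact hp (h2 ▸ h1.symm ▸ mem_compOf_self (hpA : p ∈ Aᶜ))
        have r' : ReachIn (H i)ᶜ p u := (reachIn_compOf r).mono hCsub
        exact (r'.tail ha (hAsubHc hvA)).trans ((reachA v hvA).mono hAsubHc)
    have hconnHc : connSub (H i)ᶜ :=
      connSub_iff.2 ⟨⟨a0, hAsubHc ha0⟩, fun p hp q hq =>
        (auxHc p hp).trans (auxHc q hq).symm⟩
    have hconnH : connSub (H i) := by
      rw [hHeq i]
      exact connSub_compOf (hxmem i)
    exact ⟨⟨x i, hHx i⟩, hHfin i, hconnH, hconnHc⟩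
  exact ⟨claim1, claim2, claim3, claim4, hscAtil, hscH⟩
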